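/- Continuity of the boundary pairing with respect to the graph norms (the paper's estimate (18) in a flat boundary coordinate patch, degree-0 case): For every continuously differentiable compactly supported f : ℝⁿ → ℝ and continuously differentiable compactly supported vector field v : ℝⁿ → ℝⁿ, one has |∫_{ℝ^{n−1}} f(y,0)·v_n(y,0) dy| ≤ (‖f‖²_{L²(H₊)} + ‖∇f‖²_{L²(H₊;ℝⁿ)})^{1/2} · (‖v‖²_{L²(H₊;ℝⁿ)} + ‖div v‖²_{L²(H₊)})^{1/2}, where v_n denotes the n-th component of v. -/

import Mathlib

open MeasureTheory Filter Topology RealInnerProductSpace ENNReal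

noncomputable section

/-- The (classical) divergence of a vector field on Euclidean space. -/
def diverg {n : ℕ} (v : EuclideanSpace ℝ (Fin n) → EuclideanSpace ℝ (Fin n))
    (x : EuclideanSpace ℝ (Fin n)) : ℝ :=
  ∑ i, fderiv ℝ v x (EuclideanSpace.single i 1) i

/-- The open upper half-space `H₊ = {x ∈ ℝⁿ : xₙ > 0}` (with `n = m + 1`). -/
def upperHalfSpace (m : ℕ) : Set (EuclideanSpace ℝ (Fin (m + 1))) :=
  {x | 0 < x (Fin.last m)}

/-- The identification of `ℝ^{n-1}` with the boundary of the half-space, `y ↦ (y, 0)`. -/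
def bdryEmb {m : ℕ} (y : EuclideanSpace ℝ (Fin m)) : EuclideanSpace ℝ (Fin (m + 1)) :=
  WithLp.toLp 2 (Fin.snoc (fun i => y i) 0 : Fin (m + 1) → ℝ)

open Set

lemma coord_le_norm {k : ℕ} (x : EuclideanSpace ℝ (Fin k)) (i : Fin k) : |x i| ≤ ‖x‖ := by
  rw [EuclideanSpace.norm_eq, ← Real.sqrt_sq_eq_abs]
  apply Real.sqrt_le_sqrt
  have : |x i| ^ 2 ≤ ∑ j, |x j| ^ 2 :=
    Finset.single_le_sum (f := fun j => |x j| ^ 2) (fun j _ => by positivity) (Finset.mem_univ i)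
  simpa using this

lemma sum_single_smul {k : ℕ} (w : EuclideanSpace ℝ (Fin k)) :
    (∑ i, w i • EuclideanSpace.single i (1:ℝ)) = w := by
  have := (EuclideanSpace.basisFun (Fin k) ℝ).sum_repr w
  simpa [EuclideanSpace.basisFun_apply, EuclideanSpace.basisFun_repr] using this

lemma ptwise {n : ℕ} (f : EuclideanSpace ℝ (Fin n) → ℝ)
    (v : EuclideanSpace ℝ (Fin n) → EuclideanSpace ℝ (Fin n))
    (hf : ContDiff ℝ 1 f) (hv : ContDiff ℝ 1 v) (x : EuclideanSpace ℝ (Fin n)) :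
    ∑ i, fderiv ℝ (fun y => f y * v y i) x (EuclideanSpace.single i 1)
      = fderiv ℝ f x (v x) + f x * diverg v x := by
  have hfd := hf.differentiable one_ne_zero
  have hvd := hv.differentiable one_ne_zero
  have hvi : ∀ i : Fin n, HasFDerivAt (fun y => v y i)
      ((EuclideanSpace.proj i).comp (fderiv ℝ v x)) x := fun i =>
    (EuclideanSpace.proj (𝕜 := ℝ) i).hasFDerivAt.comp x (hvd x).hasFDerivAt
  have key : ∀ i : Fin n, fderiv ℝ (fun y => f y * v y i) x
      = f x • ((EuclideanSpace.proj i).comp (fderiv ℝ v x)) + v x i • fderiv ℝ f x := by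
    intro i
    rw [fderiv_fun_mul (hfd x) ((hvi i).differentiableAt), (hvi i).fderiv]
  calc ∑ i, fderiv ℝ (fun y => f y * v y i) x (EuclideanSpace.single i 1)
      = ∑ i, (f x * (fderiv ℝ v x (EuclideanSpace.single i 1) i)
          + v x i * fderiv ℝ f x (EuclideanSpace.single i 1)) := by
        refine Finset.sum_congr rfl fun i _ => ?_
        rw [key i]; simp [smul_eq_mul]
    _ = f x * diverg v x + fderiv ℝ f x (v x) := by
        rw [Finset.sum_add_distrib, ← Finset.mul_sum, diverg]
        congr 1
        calc ∑ i, v x i * fderiv ℝ f x (EuclideanSpace.single i 1)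
            = fderiv ℝ f x (∑ i, v x i • EuclideanSpace.single i (1:ℝ)) := by
              rw [map_sum]; simp [smul_eq_mul]
          _ = fderiv ℝ f x (v x) := by rw [sum_single_smul]
    _ = _ := by ring


lemma csint {α : Type*} [MeasurableSpace α] {μ : Measure α} {g h : α → ℝ}
    (hg : MemLp g 2 μ) (hh : MemLp h 2 μ) :
    ∫ x, |g x| * |h x| ∂μ
      ≤ Real.sqrt (∫ x, (g x)^2 ∂μ) * Real.sqrt (∫ x, (h x)^2 ∂μ) := by
  have h22 : Real.HolderConjugate 2 2 := .two_two
  have h2 : (ENNReal.ofReal 2) = 2 := by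
    simp [ENNReal.ofReal_ofNat]
  have key := integral_mul_norm_le_Lp_mul_Lq (μ := μ) h22 (h2 ▸ hg) (h2 ▸ hh)
  have e1 : ∀ u : α → ℝ, (∫ x, ‖u x‖ ^ (2:ℝ) ∂μ) = ∫ x, (u x)^2 ∂μ := by
    intro u
    refine integral_congr_ae (Filter.Eventually.of_forall fun x => ?_)
    have : ‖u x‖ ^ (2:ℝ) = u x ^ 2 := by
      rw [show (2:ℝ) = ((2:ℕ):ℝ) by norm_num, Real.rpow_natCast, Real.norm_eq_abs, sq_abs]
    exact this
  rw [e1 g, e1 h] at key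
  simp only [Real.norm_eq_abs] at key
  calc ∫ x, |g x| * |h x| ∂μ
      ≤ (∫ x, (g x)^2 ∂μ) ^ ((1:ℝ)/2) * (∫ x, (h x)^2 ∂μ) ^ ((1:ℝ)/2) := key
    _ = _ := by rw [← Real.sqrt_eq_rpow, ← Real.sqrt_eq_rpow]

lemma sqrtCS' (a b c d : ℝ) (ha : 0 ≤ a) (hb : 0 ≤ b) (hc : 0 ≤ c) (hd : 0 ≤ d) :
    b * c + a * d ≤ Real.sqrt (a^2 + b^2) * Real.sqrt (c^2 + d^2) := by
  rw [← Real.sqrt_mul (by positivity)]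
  rw [show b*c + a*d = Real.sqrt ((b*c+a*d)^2) by rw [Real.sqrt_sq (by positivity)]]
  apply Real.sqrt_le_sqrt
  nlinarith [sq_nonneg (a*c - b*d)]

lemma sqrtCS {A B C D : ℝ} (hA : 0 ≤ A) (hB : 0 ≤ B) (hC : 0 ≤ C) (hD : 0 ≤ D) :
    Real.sqrt B * Real.sqrt C + Real.sqrt A * Real.sqrt D
      ≤ Real.sqrt (A + B) * Real.sqrt (C + D) := by
  have key := sqrtCS' (Real.sqrt A) (Real.sqrt B) (Real.sqrt C) (Real.sqrt D)
    (Real.sqrt_nonneg _) (Real.sqrt_nonneg _) (Real.sqrt_nonneg _) (Real.sqrt_nonneg _)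
  rwa [Real.sq_sqrt hA, Real.sq_sqrt hB, Real.sq_sqrt hC, Real.sq_sqrt hD] at key

lemma stepA (m : ℕ)
    (f : EuclideanSpace ℝ (Fin (m + 1)) → ℝ)
    (v : EuclideanSpace ℝ (Fin (m + 1)) → EuclideanSpace ℝ (Fin (m + 1)))
    (hf : ContDiff ℝ 1 f) (hfsupp : HasCompactSupport f)
    (hv : ContDiff ℝ 1 v) :
    ∫ y : EuclideanSpace ℝ (Fin m), f (bdryEmb y) * v (bdryEmb y) (Fin.last m)
      = - ∫ x in upperHalfSpace m, (fderiv ℝ f x (v x) + f x * diverg v x) := by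
  classical
  set η : (Fin (m+1) → ℝ) ≃L[ℝ] EuclideanSpace ℝ (Fin (m+1)) :=
    (EuclideanSpace.equiv (Fin (m+1)) ℝ).symm with hη
  set G : EuclideanSpace ℝ (Fin (m+1)) → ℝ :=
    fun x => fderiv ℝ f x (v x) + f x * diverg v x with hG
  -- radius
  obtain ⟨R₀, hR₀⟩ := hfsupp.isBounded.subset_closedBall 0
  set R : ℝ := max R₀ 1 with hRdef
  have hR1 : (1:ℝ) ≤ R := le_max_right _ _
  have hR0 : (0:ℝ) < R := lt_of_lt_of_le one_pos hR1
  have hRK : tsupport f ⊆ Metric.closedBall 0 R :=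
    hR₀.trans (Metric.closedBall_subset_closedBall (le_max_left _ _))
  have hcoord : ∀ z : EuclideanSpace ℝ (Fin (m+1)), z ∈ tsupport f → ∀ i, |z i| ≤ R := by
    intro z hz i
    have : ‖z‖ ≤ R := by simpa using hRK hz
    exact (coord_le_norm z i).trans this
  have hfz : ∀ z : EuclideanSpace ℝ (Fin (m+1)), (∃ i, R < |z i|) → f z = 0 := by
    intro z ⟨i, hi⟩
    apply image_eq_zero_of_notMem_tsupport
    intro hz; exact absurd (hcoord z hz i) (not_le.2 hi)
  have hGz : ∀ z : EuclideanSpace ℝ (Fin (m+1)), z ∉ tsupport f → G z = 0 := by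
    intro z hz
    have h1 : f z = 0 := image_eq_zero_of_notMem_tsupport hz
    have h2 : fderiv ℝ f z = 0 := by
      by_contra h
      exact hz (support_fderiv_subset (𝕜 := ℝ) (f := f) h)
    simp [hG, h1, h2]
  -- box
  set a : Fin (m+1) → ℝ := fun i => if i = Fin.last m then 0 else -(R+1) with ha
  set b : Fin (m+1) → ℝ := fun _ => R + 1 with hb
  have hle : a ≤ b := by
    intro i; simp only [ha, hb]; split <;> nlinarith
  -- derivative of products
  have hfd := hf.differentiable one_ne_zero
  have hvd := hv.differentiable one_ne_zero
  have hprod : ∀ (i : Fin (m+1)) (z : EuclideanSpace ℝ (Fin (m+1))),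
      HasFDerivAt (fun y => f y * v y i) (fderiv ℝ (fun y => f y * v y i) z) z := by
    intro i z
    refine DifferentiableAt.hasFDerivAt ?_
    exact (hfd z).mul (((EuclideanSpace.proj (𝕜 := ℝ) i).differentiable.comp hvd) z)
  -- continuity of G
  have hGc : Continuous G := by
    have h1 : Continuous (fderiv ℝ f) := hf.continuous_fderiv one_ne_zero
    have h2 : Continuous (fderiv ℝ v) := hv.continuous_fderiv one_ne_zero
    have h3 : Continuous fun x => fderiv ℝ f x (v x) := h1.clm_apply hv.continuous
    have h4 : Continuous (diverg v) := by
      apply continuous_finset_sum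
      intro i _
      exact (EuclideanSpace.proj (𝕜 := ℝ) i).continuous.comp (h2.clm_apply continuous_const)
    exact h3.add (hf.continuous.mul h4)
  -- divergence theorem
  have EQ := integral_divergence_of_hasFDerivAt_off_countable' (E := ℝ) (n := m) a b hle
    (fun i x => f (η x) * v (η x) i)
    (fun i x => (fderiv ℝ (fun y => f y * v y i) (η x)).comp
      (η : (Fin (m+1) → ℝ) →L[ℝ] EuclideanSpace ℝ (Fin (m+1))))
    ∅ Set.countable_empty
    (fun i => by
      apply Continuous.continuousOn
      exact ((hf.continuous.comp η.continuous).mul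
        ((EuclideanSpace.proj (𝕜 := ℝ) i).continuous.comp (hv.continuous.comp η.continuous))))
    (fun x _ i => (hprod i (η x)).comp x η.hasFDerivAt)
    (by
      have key : (fun x : Fin (m+1) → ℝ =>
          ∑ i, ((fderiv ℝ (fun y => f y * v y i) (η x)).comp
            (η : (Fin (m+1) → ℝ) →L[ℝ] EuclideanSpace ℝ (Fin (m+1)))) (Pi.single i 1))
          = fun x => G (η x) := by
        funext x
        exact ptwise f v hf hv (η x)
      rw [key]
      exact (hGc.comp η.continuous).continuousOn.integrableOn_Icc)
  simp only at EQ
  -- rewrite the LHS integrand to G ∘ η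
  have key' : ∀ x : Fin (m+1) → ℝ,
      ∑ i, ((fderiv ℝ (fun y => f y * v y i) (η x)).comp
        (η : (Fin (m+1) → ℝ) →L[ℝ] EuclideanSpace ℝ (Fin (m+1)))) (Pi.single i 1)
        = G (η x) := fun x => ptwise f v hf hv (η x)
  simp only [key'] at EQ
  -- LHS : set comparison in pi world
  set S' : Set (Fin (m+1) → ℝ) := {x | 0 < x (Fin.last m)} with hS'
  have hopen : IsOpen S' := isOpen_lt continuous_const (continuous_apply (Fin.last m))
  have hmemIcc : ∀ x : Fin (m+1) → ℝ, η x ∈ tsupport f → 0 ≤ x (Fin.last m) →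
      x ∈ Set.Icc a b := by
    intro x hx hx0
    constructor
    · intro i
      by_cases hi : i = Fin.last m
      · subst hi; simpa [ha] using hx0
      · have := (hcoord _ hx i)
        simp only [ha, if_neg hi]
        have : -(R) ≤ x i := neg_le_of_abs_le this
        linarith
    · intro i
      have := (hcoord _ hx i)
      have : x i ≤ R := le_of_abs_le this
      simp only [hb]; linarith
  have h1 : ∫ x in S', G (η x) = ∫ x in S' ∩ Set.Icc a b, G (η x) := by
    refine setIntegral_eq_of_subset_of_ae_diff_eq_zero hopen.measurableSet.nullMeasurableSet
      Set.inter_subset_left (Filter.Eventually.of_forall ?_)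
    rintro x ⟨hxS, hxI⟩
    apply hGz
    intro hmem
    exact hxI ⟨hxS, hmemIcc x hmem (le_of_lt hxS)⟩
  have hplane : (volume : Measure (Fin (m+1) → ℝ)) {x | x (Fin.last m) = 0} = 0 := by
    rw [volume_pi]; exact Measure.pi_hyperplane _ _ _
  have h2 : ∫ x in Set.Icc a b, G (η x) = ∫ x in S' ∩ Set.Icc a b, G (η x) := by
    refine setIntegral_eq_of_subset_of_ae_diff_eq_zero
      isClosed_Icc.measurableSet.nullMeasurableSet Set.inter_subset_right ?_
    have hae : {x : Fin (m+1) → ℝ | x (Fin.last m) = 0}ᶜ ∈ ae volume :=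
      compl_mem_ae_iff.2 hplane
    filter_upwards [hae] with x hx
    rintro ⟨hxI, hxM⟩
    exfalso
    apply hx
    have hge : 0 ≤ x (Fin.last m) := by
      have := hxI.1 (Fin.last m)
      simpa [ha] using this
    have hle' : x (Fin.last m) ≤ 0 := by
      by_contra hlt
      exact hxM ⟨lt_of_not_ge hlt, hxI⟩
    exact le_antisymm hle' hge
  -- faces
  have hface : ∀ (i : Fin (m+1)) (c : ℝ), R < |c| → ∀ y : Fin m → ℝ,
      f (η (i.insertNth c y)) * v (η (i.insertNth c y)) i = 0 := by
    intro i c hc y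
    have hz : f (η (i.insertNth c y)) = 0 := by
      apply hfz
      refine ⟨i, ?_⟩
      have h2 : R < |(i.insertNth c y : Fin (m+1) → ℝ) i| := by
        rw [Fin.insertNth_apply_same]; exact hc
      exact h2
    rw [hz, zero_mul]
  have hsum : ∑ i : Fin (m + 1),
      ((∫ (x : Fin m → ℝ) in Set.Icc (a ∘ i.succAbove) (b ∘ i.succAbove),
          f (η (i.insertNth (b i) x)) * v (η (i.insertNth (b i) x)) i) -
        ∫ (x : Fin m → ℝ) in Set.Icc (a ∘ i.succAbove) (b ∘ i.succAbove),
          f (η (i.insertNth (a i) x)) * v (η (i.insertNth (a i) x)) i)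
      = - ∫ (x : Fin m → ℝ) in
            Set.Icc (a ∘ (Fin.last m).succAbove) (b ∘ (Fin.last m).succAbove),
          f (η ((Fin.last m).insertNth 0 x)) * v (η ((Fin.last m).insertNth 0 x)) (Fin.last m) := by
    rw [Finset.sum_eq_single (Fin.last m)]
    · have hb' : (b (Fin.last m) : ℝ) = R + 1 := rfl
      have hfront : ∀ x : Fin m → ℝ,
          f (η ((Fin.last m).insertNth (b (Fin.last m)) x))
            * v (η ((Fin.last m).insertNth (b (Fin.last m)) x)) (Fin.last m) = 0 := by
        intro x
        apply hface
        rw [hb', abs_of_pos (by linarith)]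
        linarith
      have ha' : a (Fin.last m) = 0 := by simp [ha]
      rw [ha']
      simp only [hfront, integral_zero, zero_sub]
    · intro i _ hi
      have hbz : ∀ x : Fin m → ℝ,
          f (η (i.insertNth (b i) x)) * v (η (i.insertNth (b i) x)) i = 0 := by
        intro x
        apply hface
        rw [show b i = R + 1 from rfl, abs_of_pos (by linarith)]
        linarith
      have haz : ∀ x : Fin m → ℝ,
          f (η (i.insertNth (a i) x)) * v (η (i.insertNth (a i) x)) i = 0 := by
        intro x
        apply hface
        rw [show a i = -(R+1) from if_neg hi, abs_of_neg (by linarith)]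
        linarith
      simp only [hbz, haz, integral_zero, sub_zero, sub_self]
    · intro h
      exact absurd (Finset.mem_univ _) h
  rw [hsum] at EQ
  -- extend back-face integral to the whole space
  have hext : ∫ (x : Fin m → ℝ) in
        Set.Icc (a ∘ (Fin.last m).succAbove) (b ∘ (Fin.last m).succAbove),
        f (η ((Fin.last m).insertNth 0 x)) * v (η ((Fin.last m).insertNth 0 x)) (Fin.last m)
      = ∫ (x : Fin m → ℝ),
        f (η ((Fin.last m).insertNth 0 x)) * v (η ((Fin.last m).insertNth 0 x)) (Fin.last m) := by
    apply setIntegral_eq_integral_of_forall_compl_eq_zero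
    intro x hx
    have : ∃ j : Fin m, R < |x j| := by
      by_contra hc
      push_neg at hc
      apply hx
      constructor
      · intro j
        have hne : (Fin.last m).succAbove j ≠ Fin.last m := Fin.succAbove_ne _ _
        simp only [Function.comp_apply, ha, if_neg hne]
        have := neg_le_of_abs_le (hc j)
        linarith
      · intro j
        simp only [Function.comp_apply, hb]
        have := le_of_abs_le (hc j)
        linarith
    obtain ⟨j, hj⟩ := this
    have hz : f (η ((Fin.last m).insertNth 0 x)) = 0 := by
      apply hfz
      refine ⟨(Fin.last m).succAbove j, ?_⟩
      have h2 : R < |((Fin.last m).insertNth (0:ℝ) x : Fin (m+1) → ℝ) ((Fin.last m).succAbove j)| := by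
        rw [Fin.insertNth_apply_succAbove]; exact hj
      exact h2
    rw [hz, zero_mul]
  rw [hext] at EQ
  -- transfer: boundary integral
  have hbdry : ∫ y : EuclideanSpace ℝ (Fin m), f (bdryEmb y) * v (bdryEmb y) (Fin.last m)
      = ∫ (x : Fin m → ℝ),
        f (η ((Fin.last m).insertNth 0 x)) * v (η ((Fin.last m).insertNth 0 x)) (Fin.last m) := by
    have hmp := (EuclideanSpace.volume_preserving_symm_measurableEquiv_toLp (Fin m)).symm
    rw [← hmp.integral_comp (MeasurableEquiv.measurableEmbedding _)
      (fun y => f (bdryEmb y) * v (bdryEmb y) (Fin.last m))]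
    refine integral_congr_ae (Filter.Eventually.of_forall fun x => ?_)
    have hsnoc : ((Fin.last m).insertNth (0:ℝ) x : Fin (m+1) → ℝ) = Fin.snoc x (0:ℝ) :=
      Fin.insertNth_last' 0 x
    have hpt : (η ((Fin.last m).insertNth (0:ℝ) x))
        = bdryEmb ((MeasurableEquiv.toLp 2 (Fin m → ℝ)) x) :=
      congrArg (fun z => η z) hsnoc
    exact (congrArg (fun z => f z * v z (Fin.last m)) hpt).symm
  -- transfer: half-space integral
  have hhalf : ∫ x in upperHalfSpace m, G x = ∫ x in S', G (η x) := by
    have hmp := (EuclideanSpace.volume_preserving_symm_measurableEquiv_toLp (Fin (m+1))).symm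
    rw [← hmp.setIntegral_preimage_emb (MeasurableEquiv.measurableEmbedding _) G (upperHalfSpace m)]
    rfl
  rw [hbdry, hhalf, h1, ← h2, EQ, neg_neg]


/-- **Continuity of the boundary pairing with respect to the graph norms**
(degree-0 case, flat boundary chart):
`|∫_{ℝ^{n−1}} f(y,0)·vₙ(y,0) dy| ≤ (‖f‖² + ‖∇f‖²)^{1/2} (‖v‖² + ‖div v‖²)^{1/2}`,
with all the norms on the right taken in `L²` of the half-space `H₊`. -/
theorem boundary_pairing_graph_norm_estimate
    (m : ℕ)
    (f : EuclideanSpace ℝ (Fin (m + 1)) → ℝ)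
    (v : EuclideanSpace ℝ (Fin (m + 1)) → EuclideanSpace ℝ (Fin (m + 1)))
    (hf : ContDiff ℝ 1 f) (hfsupp : HasCompactSupport f)
    (hv : ContDiff ℝ 1 v) (hvsupp : HasCompactSupport v) :
    |∫ y : EuclideanSpace ℝ (Fin m), f (bdryEmb y) * v (bdryEmb y) (Fin.last m)|
      ≤ Real.sqrt ((∫ x in upperHalfSpace m, (f x) ^ 2)
            + ∫ x in upperHalfSpace m, ‖gradient f x‖ ^ 2)
        * Real.sqrt ((∫ x in upperHalfSpace m, ‖v x‖ ^ 2)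
            + ∫ x in upperHalfSpace m, (diverg v x) ^ 2) := by
  have hA := stepA m f v hf hfsupp hv
  rw [hA, abs_neg]
  set μ := (volume : Measure (EuclideanSpace ℝ (Fin (m+1)))).restrict (upperHalfSpace m) with hμ
  -- continuity facts
  have hdivc : Continuous (diverg v) := by
    apply continuous_finset_sum; intro i _
    exact (EuclideanSpace.proj (𝕜 := ℝ) i).continuous.comp
      ((hv.continuous_fderiv one_ne_zero).clm_apply continuous_const)
  have hGc : Continuous (fun x => fderiv ℝ f x (v x) + f x * diverg v x) :=
    ((hf.continuous_fderiv one_ne_zero).clm_apply hv.continuous).add (hf.continuous.mul hdivc)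
  have hgradc : Continuous (gradient f) :=
    (InnerProductSpace.toDual ℝ _).symm.continuous.comp (hf.continuous_fderiv one_ne_zero)
  -- support facts
  have hdivsupp : HasCompactSupport (diverg v) := by
    apply (HasCompactSupport.fderiv (𝕜 := ℝ) hvsupp).mono'
    intro x hx
    by_contra hmem
    apply hx
    have h0 : fderiv ℝ v x = 0 := image_eq_zero_of_notMem_tsupport hmem
    simp [diverg, h0]
  have hGsupp : HasCompactSupport (fun x => fderiv ℝ f x (v x) + f x * diverg v x) := by
    apply hfsupp.mono'
    intro x hx
    by_contra hmem
    apply hx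
    have h0 : fderiv ℝ f x = 0 := by
      by_contra h
      exact hmem (support_fderiv_subset (𝕜 := ℝ) (Function.mem_support.2 h))
    have h1 : f x = 0 := image_eq_zero_of_notMem_tsupport hmem
    simp [h0, h1]
  have hgradsupp : HasCompactSupport (gradient f) := by
    apply (HasCompactSupport.fderiv (𝕜 := ℝ) hfsupp).mono'
    intro x hx
    by_contra hmem
    apply hx
    have h0 : fderiv ℝ f x = 0 := image_eq_zero_of_notMem_tsupport hmem
    show gradient f x = 0
    rw [gradient, h0, map_zero]
  -- Memℒp facts
  have ml_grad : MemLp (fun x => ‖gradient f x‖) 2 μ :=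
    (hgradc.norm.memLp_of_hasCompactSupport hgradsupp.norm).restrict _
  have ml_v : MemLp (fun x => ‖v x‖) 2 μ :=
    (hv.continuous.norm.memLp_of_hasCompactSupport hvsupp.norm).restrict _
  have ml_f : MemLp f 2 μ :=
    (hf.continuous.memLp_of_hasCompactSupport hfsupp).restrict _
  have ml_div : MemLp (diverg v) 2 μ :=
    (hdivc.memLp_of_hasCompactSupport hdivsupp).restrict _
  -- Cauchy-Schwarz
  have hcs1 := csint (μ := μ) ml_grad ml_v
  simp only [abs_norm] at hcs1
  have hcs2 := csint (μ := μ) ml_f ml_div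
  -- integrability
  have hGint : Integrable (fun x => fderiv ℝ f x (v x) + f x * diverg v x) μ :=
    (hGc.integrable_of_hasCompactSupport hGsupp).restrict
  have hint1 : Integrable (fun x => ‖gradient f x‖ * ‖v x‖) μ :=
    ((hgradc.norm.mul hv.continuous.norm).integrable_of_hasCompactSupport
      hvsupp.norm.mul_left).restrict
  have hint2 : Integrable (fun x => |f x| * |diverg v x|) μ :=
    ((hf.continuous.abs.mul hdivc.abs).integrable_of_hasCompactSupport
      hdivsupp.abs.mul_left).restrict
  -- pointwise bound
  have hGb : ∀ x, |fderiv ℝ f x (v x) + f x * diverg v x|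
      ≤ ‖gradient f x‖ * ‖v x‖ + |f x| * |diverg v x| := by
    intro x
    have hgn : ‖gradient f x‖ = ‖fderiv ℝ f x‖ := by
      rw [gradient]; exact LinearIsometryEquiv.norm_map _ _
    have h1 : |fderiv ℝ f x (v x)| ≤ ‖gradient f x‖ * ‖v x‖ := by
      rw [hgn, ← Real.norm_eq_abs]
      exact (fderiv ℝ f x).le_opNorm (v x)
    calc |fderiv ℝ f x (v x) + f x * diverg v x|
        ≤ |fderiv ℝ f x (v x)| + |f x * diverg v x| := abs_add_le _ _
      _ ≤ ‖gradient f x‖ * ‖v x‖ + |f x| * |diverg v x| := by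
          rw [abs_mul]; exact add_le_add h1 le_rfl
  -- nonnegativity
  have nn1 : 0 ≤ ∫ x, (f x)^2 ∂μ := integral_nonneg fun x => sq_nonneg _
  have nn2 : 0 ≤ ∫ x, ‖gradient f x‖^2 ∂μ := integral_nonneg fun x => sq_nonneg _
  have nn3 : 0 ≤ ∫ x, ‖v x‖^2 ∂μ := integral_nonneg fun x => sq_nonneg _
  have nn4 : 0 ≤ ∫ x, (diverg v x)^2 ∂μ := integral_nonneg fun x => sq_nonneg _
  calc |∫ x, (fderiv ℝ f x (v x) + f x * diverg v x) ∂μ|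
      ≤ ∫ x, |fderiv ℝ f x (v x) + f x * diverg v x| ∂μ := by
        simpa [Real.norm_eq_abs] using
          norm_integral_le_integral_norm (μ := μ)
            (fun x => fderiv ℝ f x (v x) + f x * diverg v x)
    _ ≤ ∫ x, (‖gradient f x‖ * ‖v x‖ + |f x| * |diverg v x|) ∂μ :=
        integral_mono hGint.abs (hint1.add hint2) hGb
    _ = (∫ x, ‖gradient f x‖ * ‖v x‖ ∂μ) + ∫ x, |f x| * |diverg v x| ∂μ :=
        integral_add hint1 hint2
    _ ≤ Real.sqrt (∫ x, ‖gradient f x‖^2 ∂μ) * Real.sqrt (∫ x, ‖v x‖^2 ∂μ)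
          + Real.sqrt (∫ x, (f x)^2 ∂μ) * Real.sqrt (∫ x, (diverg v x)^2 ∂μ) :=
        add_le_add hcs1 hcs2
    _ ≤ _ := sqrtCS nn1 nn2 nn3 nn4
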